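/- Let G be a bipartite graph with a decomposition {C, H} as in Theorem: all vertices of V(C)∩V(H) = [n] in one bipartite class and 2-layered. Then for every vertex b ∈ V(C) \ [n], w_G(b) = w_C(b) · w_H, and for every a ∈ [n], w_G(a) ≤ w_C(a) · w_H(a). -/

import Mathlib

/-- A stable (independent) set of vertices. -/
def IsStable {V : Type*} (G : SimpleGraph V) (S : Finset V) : Prop :=
  ∀ a ∈ S, ∀ b ∈ S, ¬ G.Adj a b

/-- A maximal stable set. -/
def IsMaxStable {V : Type*} (G : SimpleGraph V) (S : Finset V) : Prop :=
  IsStable G S ∧ ∀ T : Finset V, IsStable G T → S ⊆ T → S = T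

/-- The number of maximal stable sets of `G`. -/
noncomputable def numMaxStable {V : Type*} (G : SimpleGraph V) : ℕ :=
  Set.ncard {S : Finset V | IsMaxStable G S}

/-- The number of maximal stable sets of `G` containing `v`. -/
noncomputable def numMaxStableCont {V : Type*} (G : SimpleGraph V) (v : V) : ℕ :=
  Set.ncard {S : Finset V | IsMaxStable G S ∧ v ∈ S}

/-- The neighborhood of a set of vertices. -/
def nbhdSet {V : Type*} (G : SimpleGraph V) (P : Set V) : Set V :=
  {w | ∃ p ∈ P, G.Adj p w}

/-- A pendant vertex: a vertex of degree exactly 1. -/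
def IsPendant {V : Type*} (G : SimpleGraph V) (u : V) : Prop :=
  ∃! w, G.Adj u w

/-- A 2-layered vertex: every neighbor is adjacent to some pendant vertex. -/
def TwoLayered {V : Type*} (G : SimpleGraph V) (v : V) : Prop :=
  ∀ w, G.Adj v w → ∃ p, G.Adj w p ∧ IsPendant G p

/-- A maximal stable set of the subgraph of `G` induced on the vertex set `A`. -/
def IsMaxStableIn {V : Type*} (G : SimpleGraph V) (A : Set V) (S : Finset V) : Prop :=
  ↑S ⊆ A ∧ IsStable G S ∧
    ∀ T : Finset V, ↑T ⊆ A → IsStable G T → S ⊆ T → S = T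

/-- A stable set of a subgraph: contained in its vertex set, no two adjacent in it. -/
def SubIsStable {V : Type*} {G : SimpleGraph V} (C : G.Subgraph) (S : Finset V) : Prop :=
  ↑S ⊆ C.verts ∧ ∀ a ∈ S, ∀ b ∈ S, ¬ C.Adj a b

/-- A maximal stable set of a subgraph. -/
def SubIsMaxStable {V : Type*} {G : SimpleGraph V} (C : G.Subgraph) (S : Finset V) : Prop :=
  SubIsStable C S ∧ ∀ T : Finset V, SubIsStable C T → S ⊆ T → S = T

/-- The number of maximal stable sets of a subgraph. -/
noncomputable def subNumMaxStable {V : Type*} {G : SimpleGraph V} (C : G.Subgraph) : ℕ :=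
  Set.ncard {S : Finset V | SubIsMaxStable C S}

/-- The number of maximal stable sets of a subgraph containing `v`. -/
noncomputable def subNumMaxStableCont {V : Type*} {G : SimpleGraph V} (C : G.Subgraph) (v : V) : ℕ :=
  Set.ncard {S : Finset V | SubIsMaxStable C S ∧ v ∈ S}

set_option linter.unusedSectionVars false

section BijAux

open scoped Classical

variable {V : Type*} [Fintype V] [DecidableEq V] {G : SimpleGraph V}

/-- Extension of the restriction of `S` to `C` to a maximal stable set of `C`. -/
noncomputable def PhiAux (C H : G.Subgraph) (S : Finset V) : Finset V :=
  Finset.univ.filter fun a =>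
    (a ∈ S ∧ a ∈ C.verts) ∨
    (a ∈ C.verts ∧ a ∈ H.verts ∧ a ∉ S ∧ ∀ w ∈ S, ¬ C.Adj a w)

/-- Merge of a maximal stable set of `C` and one of `H`. -/
noncomputable def PsiAux (C H : G.Subgraph) (S1 S2 : Finset V) : Finset V :=
  (S1.filter fun a => ∀ y ∈ S2, ¬ H.Adj a y) ∪
  (S2.filter fun a => ∀ y ∈ S1, ¬ C.Adj a y)

lemma mem_PhiAux {C H : G.Subgraph} {S : Finset V} {a : V} :
    a ∈ PhiAux C H S ↔
      (a ∈ S ∧ a ∈ C.verts) ∨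
      (a ∈ C.verts ∧ a ∈ H.verts ∧ a ∉ S ∧ ∀ w ∈ S, ¬ C.Adj a w) := by
  simp [PhiAux]

lemma mem_PsiAux {C H : G.Subgraph} {S1 S2 : Finset V} {a : V} :
    a ∈ PsiAux C H S1 S2 ↔
      (a ∈ S1 ∧ ∀ y ∈ S2, ¬ H.Adj a y) ∨ (a ∈ S2 ∧ ∀ y ∈ S1, ¬ C.Adj a y) := by
  simp [PsiAux, Finset.mem_union, Finset.mem_filter]

lemma PsiAux_comm {C H : G.Subgraph} {S1 S2 : Finset V} :
    PsiAux C H S1 S2 = PsiAux H C S2 S1 :=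
  Finset.union_comm _ _

/-- All hypotheses of the decomposition theorem, bundled. -/
structure DecompSetup (G : SimpleGraph V) (X Y : Set V) (C H : G.Subgraph) : Prop where
  hdisj : Disjoint X Y
  hbip : ∀ a b, G.Adj a b → (a ∈ X ∧ b ∈ Y) ∨ (a ∈ Y ∧ b ∈ X)
  hedge : Disjoint C.edgeSet H.edgeSet
  hunion : C ⊔ H = ⊤
  hclass : C.verts ∩ H.verts ⊆ X
  h2l : ∀ v ∈ C.verts ∩ H.verts, TwoLayered G v
  hnbr : ∀ v ∈ C.verts ∩ H.verts, (∃ w, C.Adj v w) ∧ (∃ w, H.Adj v w)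

namespace DecompSetup

variable {X Y : Set V} {C H : G.Subgraph}

lemma symm (st : DecompSetup G X Y C H) : DecompSetup G X Y H C where
  hdisj := st.hdisj
  hbip := st.hbip
  hedge := st.hedge.symm
  hunion := by rw [sup_comm]; exact st.hunion
  hclass := by rw [Set.inter_comm]; exact st.hclass
  h2l := by rw [Set.inter_comm]; exact st.h2l
  hnbr := fun v hv => ((st.hnbr v (Set.inter_comm _ _ ▸ hv))).symm

lemma adj_iff (st : DecompSetup G X Y C H) {x y : V} :
    G.Adj x y ↔ C.Adj x y ∨ H.Adj x y := by
  constructor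
  · intro h
    have : (C ⊔ H).Adj x y := by rw [st.hunion]; exact h
    exact this
  · rintro (h | h)
    · exact h.adj_sub
    · exact h.adj_sub

lemma verts_cover (st : DecompSetup G X Y C H) (v : V) :
    v ∈ C.verts ∨ v ∈ H.verts := by
  have : v ∈ (C ⊔ H).verts := by rw [st.hunion]; trivial
  exact this

lemma not_both (st : DecompSetup G X Y C H) {x y : V} (hc : C.Adj x y) (hh : H.Adj x y) :
    False := by
  have h1 : s(x, y) ∈ C.edgeSet := hc
  have h2 : s(x, y) ∈ H.edgeSet := hh
  exact Set.disjoint_left.mp st.hedge h1 h2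

lemma noXX (st : DecompSetup G X Y C H) {x y : V} (hx : x ∈ X) (hy : y ∈ X) :
    ¬ G.Adj x y := by
  intro h
  rcases st.hbip x y h with ⟨_, hY⟩ | ⟨hY, _⟩
  · exact Set.disjoint_left.mp st.hdisj hy hY
  · exact Set.disjoint_left.mp st.hdisj hx hY

lemma cAdj_of (st : DecompSetup G X Y C H) {x y : V} (hx : x ∉ H.verts)
    (h : G.Adj x y) : C.Adj x y := by
  rcases (st.adj_iff).mp h with h | h
  · exact h
  · exact absurd h.fst_mem hx

lemma nbr_not_inter (st : DecompSetup G X Y C H) {v w : V}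
    (hv : v ∈ C.verts ∩ H.verts) (h : G.Adj v w) : w ∉ X := by
  have hvX : v ∈ X := st.hclass hv
  rcases st.hbip v w h with ⟨_, hY⟩ | ⟨hY, _⟩
  · exact fun hw => Set.disjoint_left.mp st.hdisj hw hY
  · exact absurd hvX (fun _ => Set.disjoint_left.mp st.hdisj hvX hY)

end DecompSetup

/-- A maximal stable set dominates: every vertex not in it has a neighbor in it. -/
lemma IsMaxStable.exists_nbr {S : Finset V} (hS : IsMaxStable G S) {v : V}
    (hv : v ∉ S) : ∃ w ∈ S, G.Adj v w := by
  by_contra hcon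
  push_neg at hcon
  have hstab : IsStable G (insert v S) := by
    intro a ha b hb hab
    rcases Finset.mem_insert.mp ha with ha' | ha'
    · rcases Finset.mem_insert.mp hb with hb' | hb'
      · subst ha'; subst hb'; exact G.loopless.irrefl _ hab
      · subst ha'; exact hcon b hb' hab
    · rcases Finset.mem_insert.mp hb with hb' | hb'
      · subst hb'; exact hcon a ha' hab.symm
      · exact hS.1 a ha' b hb' hab
  have := hS.2 _ hstab (Finset.subset_insert _ _)
  exact hv (this ▸ Finset.mem_insert_self v S)

lemma SubIsMaxStable.exists_nbr {C : G.Subgraph} {S : Finset V}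
    (hS : SubIsMaxStable C S) {v : V} (hvV : v ∈ C.verts) (hv : v ∉ S) :
    ∃ w ∈ S, C.Adj v w := by
  by_contra hcon
  push_neg at hcon
  have hstab : SubIsStable C (insert v S) := by
    constructor
    · intro a ha
      rcases Finset.mem_insert.mp (by exact_mod_cast ha) with rfl | ha'
      · exact hvV
      · exact hS.1.1 ha'
    · intro a ha b hb hab
      rcases Finset.mem_insert.mp ha with ha' | ha'
      · rcases Finset.mem_insert.mp hb with hb' | hb'
        · subst ha'; subst hb'; exact C.loopless.irrefl _ hab
        · subst ha'; exact hcon b hb' hab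
      · rcases Finset.mem_insert.mp hb with hb' | hb'
        · subst hb'; exact hcon a ha' hab.symm
        · exact hS.1.2 a ha' b hb' hab
  have := hS.2 _ hstab (Finset.subset_insert _ _)
  exact hv (this ▸ Finset.mem_insert_self v S)

/-- Converse: stable + dominating implies maximal stable. -/
lemma isMaxStable_of_dom {S : Finset V} (h1 : IsStable G S)
    (h2 : ∀ v, v ∉ S → ∃ w ∈ S, G.Adj v w) : IsMaxStable G S := by
  refine ⟨h1, fun T hT hsub => ?_⟩
  by_contra hne
  obtain ⟨t, htT, htS⟩ := Finset.exists_of_ssubset (lt_of_le_of_ne hsub hne)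
  obtain ⟨w, hwS, hadj⟩ := h2 t htS
  exact hT t htT w (hsub hwS) hadj

lemma subIsMaxStable_of_dom {C : G.Subgraph} {S : Finset V} (h1 : SubIsStable C S)
    (h2 : ∀ v ∈ C.verts, v ∉ S → ∃ w ∈ S, C.Adj v w) : SubIsMaxStable C S := by
  refine ⟨h1, fun T hT hsub => ?_⟩
  by_contra hne
  obtain ⟨t, htT, htS⟩ := Finset.exists_of_ssubset (lt_of_le_of_ne hsub hne)
  obtain ⟨w, hwS, hadj⟩ := h2 t (hT.1 htT) htS
  exact hT.2 t htT w (hsub hwS) hadj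

end BijAux
section BijMain

variable {V : Type*} [Fintype V] [DecidableEq V] {G : SimpleGraph V}
variable {X Y : Set V} {C H : G.Subgraph}

namespace DecompSetup

/-- `PhiAux C H S` is a maximal stable set of `C` whenever `S` is one of `G`. -/
lemma phi_max (st : DecompSetup G X Y C H) {S : Finset V} (hS : IsMaxStable G S) :
    SubIsMaxStable C (PhiAux C H S) := by
  refine subIsMaxStable_of_dom ⟨?_, ?_⟩ ?_
  · intro a ha
    rcases mem_PhiAux.mp (Finset.mem_coe.mp ha) with ⟨_, h⟩ | ⟨h, _⟩ <;> exact h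
  · intro a ha b hb hab
    rcases mem_PhiAux.mp ha with ⟨haS, haC⟩ | ⟨haC, haH, haS, hano⟩
    · rcases mem_PhiAux.mp hb with ⟨hbS, hbC⟩ | ⟨hbC, hbH, hbS, hbno⟩
      · exact hS.1 a haS b hbS hab.adj_sub
      · exact hbno a haS hab.symm
    · rcases mem_PhiAux.mp hb with ⟨hbS, hbC⟩ | ⟨hbC, hbH, hbS, hbno⟩
      · exact hano b hbS hab
      · exact st.noXX (st.hclass ⟨haC, haH⟩) (st.hclass ⟨hbC, hbH⟩) hab.adj_sub
  · intro u huV huN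
    have huS : u ∉ S := fun h => huN (mem_PhiAux.mpr (Or.inl ⟨h, huV⟩))
    by_cases huH : u ∈ H.verts
    · have hne : ¬ (∀ w ∈ S, ¬ C.Adj u w) :=
        fun h => huN (mem_PhiAux.mpr (Or.inr ⟨huV, huH, huS, h⟩))
      push_neg at hne
      obtain ⟨w, hwS, hw⟩ := hne
      exact ⟨w, mem_PhiAux.mpr (Or.inl ⟨hwS, hw.snd_mem⟩), hw⟩
    · obtain ⟨w, hwS, hw⟩ := hS.exists_nbr huS
      have hcw : C.Adj u w := st.cAdj_of huH hw
      exact ⟨w, mem_PhiAux.mpr (Or.inl ⟨hwS, hcw.snd_mem⟩), hcw⟩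

/-- `PsiAux C H S1 S2` is stable in `G`. -/
lemma psi_stable (st : DecompSetup G X Y C H) {S1 S2 : Finset V}
    (h1 : SubIsMaxStable C S1) (h2 : SubIsMaxStable H S2) :
    IsStable G (PsiAux C H S1 S2) := by
  intro a ha b hb hab
  rcases mem_PsiAux.mp ha with ⟨ha1, haP⟩ | ⟨ha2, haP⟩ <;>
    rcases mem_PsiAux.mp hb with ⟨hb1, hbP⟩ | ⟨hb2, hbP⟩
  · rcases st.adj_iff.mp hab with hc | hh
    · exact h1.1.2 a ha1 b hb1 hc
    · exact st.noXX (st.hclass ⟨h1.1.1 ha1, hh.fst_mem⟩)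
        (st.hclass ⟨h1.1.1 hb1, hh.snd_mem⟩) hab
  · rcases st.adj_iff.mp hab with hc | hh
    · exact hbP a ha1 hc.symm
    · exact haP b hb2 hh
  · rcases st.adj_iff.mp hab with hc | hh
    · exact haP b hb1 hc
    · exact hbP a ha2 hh.symm
  · rcases st.adj_iff.mp hab with hc | hh
    · exact st.noXX (st.hclass ⟨hc.fst_mem, h2.1.1 ha2⟩)
        (st.hclass ⟨hc.snd_mem, h2.1.1 hb2⟩) hab
    · exact h2.1.2 a ha2 b hb2 hh

/-- Domination for vertices of `C.verts \ H.verts` (uses the 2-layered condition). -/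
lemma psi_dom_left (st : DecompSetup G X Y C H) {S1 S2 : Finset V}
    (h1 : SubIsMaxStable C S1) (h2 : SubIsMaxStable H S2) {v : V}
    (hvC : v ∈ C.verts) (hvH : v ∉ H.verts) (hv : v ∉ PsiAux C H S1 S2) :
    ∃ w ∈ PsiAux C H S1 S2, G.Adj v w := by
  have hv1 : v ∉ S1 := fun h =>
    hv (mem_PsiAux.mpr (Or.inl ⟨h, fun y _ hadj => hvH hadj.fst_mem⟩))
  obtain ⟨w, hw1, hcw⟩ := h1.exists_nbr hvC hv1
  by_cases hP : ∀ y ∈ S2, ¬ H.Adj w y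
  · exact ⟨w, mem_PsiAux.mpr (Or.inl ⟨hw1, hP⟩), hcw.adj_sub⟩
  · push_neg at hP
    obtain ⟨y, hy2, hwy⟩ := hP
    have hwI : w ∈ C.verts ∩ H.verts := ⟨h1.1.1 hw1, hwy.fst_mem⟩
    obtain ⟨p, hvp, hpend⟩ := st.h2l w hwI v hcw.adj_sub.symm
    obtain ⟨q, hq, huq⟩ := hpend
    have huniq : ∀ z, G.Adj p z → z = v :=
      fun z hz => (huq z hz).trans (huq v hvp.symm).symm
    have hpH : p ∉ H.verts := by
      intro hpH
      by_cases hpC : p ∈ C.verts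
      · obtain ⟨⟨w1, hw1'⟩, ⟨w2, hw2'⟩⟩ := st.hnbr p ⟨hpC, hpH⟩
        have e1 : w1 = v := huniq w1 hw1'.adj_sub
        have e2 : w2 = v := huniq w2 hw2'.adj_sub
        exact st.not_both (e1 ▸ hw1') (e2 ▸ hw2')
      · exact hvH ((st.symm.cAdj_of hpC hvp.symm).snd_mem)
    have hpc : C.Adj p v := st.cAdj_of hpH hvp.symm
    have hp1 : p ∈ S1 := by
      by_contra hp1
      obtain ⟨z, hz1, hpz⟩ := h1.exists_nbr hpc.fst_mem hp1
      exact hv1 ((huniq z hpz.adj_sub) ▸ hz1)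
    exact ⟨p, mem_PsiAux.mpr (Or.inl ⟨hp1, fun y _ hadj => hpH hadj.fst_mem⟩), hvp⟩

/-- Domination for common vertices. -/
lemma psi_dom_inter (st : DecompSetup G X Y C H) {S1 S2 : Finset V}
    (h1 : SubIsMaxStable C S1) (h2 : SubIsMaxStable H S2) {v : V}
    (hvI : v ∈ C.verts ∩ H.verts) (hv : v ∉ PsiAux C H S1 S2) :
    ∃ w ∈ PsiAux C H S1 S2, G.Adj v w := by
  by_cases hv1 : v ∈ S1
  · by_cases hv2 : v ∈ S2
    · exact absurd (mem_PsiAux.mpr (Or.inl ⟨hv1, fun y hy hadj => h2.1.2 v hv2 y hy hadj⟩)) hv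
    · obtain ⟨y, hy2, hvy⟩ := h2.exists_nbr hvI.2 hv2
      have hyC : y ∉ C.verts := fun hyC =>
        (st.nbr_not_inter hvI hvy.adj_sub) (st.hclass ⟨hyC, hvy.snd_mem⟩)
      exact ⟨y, mem_PsiAux.mpr (Or.inr ⟨hy2, fun z _ hadj => hyC hadj.fst_mem⟩), hvy.adj_sub⟩
  · obtain ⟨w, hw1, hvw⟩ := h1.exists_nbr hvI.1 hv1
    have hwH : w ∉ H.verts := fun hwH =>
      (st.nbr_not_inter hvI hvw.adj_sub) (st.hclass ⟨h1.1.1 hw1, hwH⟩)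
    exact ⟨w, mem_PsiAux.mpr (Or.inl ⟨hw1, fun z _ hadj => hwH hadj.fst_mem⟩), hvw.adj_sub⟩

/-- `PsiAux` produces a maximal stable set of `G`. -/
lemma psi_max (st : DecompSetup G X Y C H) {S1 S2 : Finset V}
    (h1 : SubIsMaxStable C S1) (h2 : SubIsMaxStable H S2) :
    IsMaxStable G (PsiAux C H S1 S2) := by
  refine isMaxStable_of_dom (st.psi_stable h1 h2) ?_
  intro v hv
  by_cases hvH : v ∈ H.verts
  · by_cases hvC : v ∈ C.verts
    · exact st.psi_dom_inter h1 h2 ⟨hvC, hvH⟩ hv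
    · rw [PsiAux_comm] at hv ⊢
      exact st.symm.psi_dom_left h2 h1 hvH hvC hv
  · rcases st.verts_cover v with hvC | hvC
    · exact st.psi_dom_left h1 h2 hvC hvH hv
    · exact absurd hvC hvH

/-- First round trip. -/
lemma psi_phi (st : DecompSetup G X Y C H) {S : Finset V} (hS : IsMaxStable G S) :
    PsiAux C H (PhiAux C H S) (PhiAux H C S) = S := by
  ext v
  constructor
  · intro hv
    rcases mem_PsiAux.mp hv with ⟨hv1, hP⟩ | ⟨hv2, hP⟩
    · rcases mem_PhiAux.mp hv1 with ⟨hvS, _⟩ | ⟨hvC, hvH, hvS, hno⟩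
      · exact hvS
      · obtain ⟨w, hwS, hvw⟩ := hS.exists_nbr hvS
        have hH : H.Adj v w := by
          rcases st.adj_iff.mp hvw with hc | hh
          · exact absurd hc (hno w hwS)
          · exact hh
        exact absurd hH (hP w (mem_PhiAux.mpr (Or.inl ⟨hwS, hH.snd_mem⟩)))
    · rcases mem_PhiAux.mp hv2 with ⟨hvS, _⟩ | ⟨hvH, hvC, hvS, hno⟩
      · exact hvS
      · obtain ⟨w, hwS, hvw⟩ := hS.exists_nbr hvS
        have hC : C.Adj v w := by
          rcases st.adj_iff.mp hvw with hc | hh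
          · exact hc
          · exact absurd hh (hno w hwS)
        exact absurd hC (hP w (mem_PhiAux.mpr (Or.inl ⟨hwS, hC.snd_mem⟩)))
  · intro hvS
    rcases st.verts_cover v with hvC | hvH
    · refine mem_PsiAux.mpr (Or.inl ⟨mem_PhiAux.mpr (Or.inl ⟨hvS, hvC⟩), ?_⟩)
      intro y hy hadj
      rcases mem_PhiAux.mp hy with ⟨hyS, _⟩ | ⟨hyH, hyC, hyS, hyno⟩
      · exact hS.1 v hvS y hyS hadj.adj_sub
      · exact hyno v hvS hadj.symm
    · refine mem_PsiAux.mpr (Or.inr ⟨mem_PhiAux.mpr (Or.inl ⟨hvS, hvH⟩), ?_⟩)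
      intro y hy hadj
      rcases mem_PhiAux.mp hy with ⟨hyS, _⟩ | ⟨hyC, hyH, hyS, hyno⟩
      · exact hS.1 v hvS y hyS hadj.adj_sub
      · exact hyno v hvS hadj.symm

/-- Second round trip. -/
lemma phi_psi (st : DecompSetup G X Y C H) {S1 S2 : Finset V}
    (h1 : SubIsMaxStable C S1) (h2 : SubIsMaxStable H S2) :
    PhiAux C H (PsiAux C H S1 S2) = S1 := by
  ext v
  constructor
  · intro hv
    rcases mem_PhiAux.mp hv with ⟨hvS, hvC⟩ | ⟨hvC, hvH, hvS, hno⟩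
    · rcases mem_PsiAux.mp hvS with ⟨hv1, _⟩ | ⟨hv2, hP2⟩
      · exact hv1
      · by_contra hv1
        obtain ⟨w, hw1, hvw⟩ := h1.exists_nbr hvC hv1
        exact hP2 w hw1 hvw
    · by_contra hv1
      obtain ⟨w, hw1, hvw⟩ := h1.exists_nbr hvC hv1
      by_cases hPw : ∀ y ∈ S2, ¬ H.Adj w y
      · exact hno w (mem_PsiAux.mpr (Or.inl ⟨hw1, hPw⟩)) hvw
      · push_neg at hPw
        obtain ⟨y, hy2, hwy⟩ := hPw
        exact st.noXX (st.hclass ⟨hvC, hvH⟩)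
          (st.hclass ⟨h1.1.1 hw1, hwy.fst_mem⟩) hvw.adj_sub
  · intro hv1
    by_cases hP : ∀ y ∈ S2, ¬ H.Adj v y
    · exact mem_PhiAux.mpr
        (Or.inl ⟨mem_PsiAux.mpr (Or.inl ⟨hv1, hP⟩), h1.1.1 hv1⟩)
    · push_neg at hP
      obtain ⟨y, hy2, hvy⟩ := hP
      have hvC : v ∈ C.verts := h1.1.1 hv1
      have hvH : v ∈ H.verts := hvy.fst_mem
      have hv2 : v ∉ S2 := fun h => h2.1.2 v h y hy2 hvy
      have hvS : v ∉ PsiAux C H S1 S2 := by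
        intro hmem
        rcases mem_PsiAux.mp hmem with ⟨_, hq⟩ | ⟨hq, _⟩
        · exact hq y hy2 hvy
        · exact hv2 hq
      refine mem_PhiAux.mpr (Or.inr ⟨hvC, hvH, hvS, ?_⟩)
      intro w hwS hcw
      rcases mem_PsiAux.mp hwS with ⟨hw1, _⟩ | ⟨hw2, hwP⟩
      · exact h1.1.2 v hv1 w hw1 hcw
      · exact hwP v hv1 hcw.symm

lemma phi_psi' (st : DecompSetup G X Y C H) {S1 S2 : Finset V}
    (h1 : SubIsMaxStable C S1) (h2 : SubIsMaxStable H S2) :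
    PhiAux H C (PsiAux C H S1 S2) = S2 := by
  rw [PsiAux_comm]
  exact st.symm.phi_psi h2 h1

end DecompSetup

end BijMain
lemma ncard_prod_aux {α β : Type*} (s : Set α) (t : Set β) :
    (s ×ˢ t).ncard = s.ncard * t.ncard := by
  rw [← Nat.card_coe_set_eq, ← Nat.card_coe_set_eq, ← Nat.card_coe_set_eq,
    Nat.card_congr (Equiv.Set.prod s t), Nat.card_prod]

theorem stmt_13 {V : Type*} [Fintype V] [DecidableEq V] (G : SimpleGraph V)
    (X Y : Set V)
    (hdisj : Disjoint X Y) (hcov : X ∪ Y = Set.univ)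
    (hbip : ∀ a b, G.Adj a b → (a ∈ X ∧ b ∈ Y) ∨ (a ∈ Y ∧ b ∈ X))
    (C H : G.Subgraph)
    (hedge : Disjoint C.edgeSet H.edgeSet)
    (hunion : C ⊔ H = ⊤)
    (hclass : C.verts ∩ H.verts ⊆ X)
    (h2l : ∀ v ∈ C.verts ∩ H.verts, TwoLayered G v)
    (hnbr : ∀ v ∈ C.verts ∩ H.verts, (∃ w, C.Adj v w) ∧ (∃ w, H.Adj v w)) :
    (∀ b ∈ C.verts \ H.verts,
        numMaxStableCont G b = subNumMaxStableCont C b * subNumMaxStable H) ∧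
    (∀ a ∈ C.verts ∩ H.verts,
        numMaxStableCont G a ≤ subNumMaxStableCont C a * subNumMaxStableCont H a) := by
  have st : DecompSetup G X Y C H := ⟨hdisj, hbip, hedge, hunion, hclass, h2l, hnbr⟩
  have hinj : ∀ A : Set (Finset V), (∀ S ∈ A, IsMaxStable G S) →
      Set.InjOn (fun S => (PhiAux C H S, PhiAux H C S)) A := by
    intro A hA S hS T hT he
    obtain ⟨e1, e2⟩ := Prod.mk.injEq .. ▸ he
    calc S = PsiAux C H (PhiAux C H S) (PhiAux H C S) := (st.psi_phi (hA S hS)).symm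
      _ = PsiAux C H (PhiAux C H T) (PhiAux H C T) := by rw [e1, e2]
      _ = T := st.psi_phi (hA T hT)
  constructor
  · intro b hb
    obtain ⟨hbC, hbH⟩ := hb
    have himg : (fun S => (PhiAux C H S, PhiAux H C S)) '' {S | IsMaxStable G S ∧ b ∈ S}
        = {S | SubIsMaxStable C S ∧ b ∈ S} ×ˢ {S | SubIsMaxStable H S} := by
      apply Set.Subset.antisymm
      · rintro p ⟨S, ⟨hS, hbS⟩, rfl⟩
        refine ⟨⟨st.phi_max hS, ?_⟩, st.symm.phi_max hS⟩
        exact mem_PhiAux.mpr (Or.inl ⟨hbS, hbC⟩)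
      · rintro ⟨p1, p2⟩ ⟨⟨h1, hb1⟩, h2⟩
        refine ⟨PsiAux C H p1 p2, ⟨st.psi_max h1 h2, ?_⟩, ?_⟩
        · exact mem_PsiAux.mpr (Or.inl ⟨hb1, fun y _ hadj => hbH hadj.fst_mem⟩)
        · exact Prod.ext (st.phi_psi h1 h2) (st.phi_psi' h1 h2)
    have := Set.ncard_image_of_injOn
      (hinj {S | IsMaxStable G S ∧ b ∈ S} (fun S hS => hS.1))
    rw [himg, ncard_prod_aux] at this
    exact this.symm
  · intro a ha
    have hsub : (fun S => (PhiAux C H S, PhiAux H C S)) '' {S | IsMaxStable G S ∧ a ∈ S}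
        ⊆ {S | SubIsMaxStable C S ∧ a ∈ S} ×ˢ {S | SubIsMaxStable H S ∧ a ∈ S} := by
      rintro p ⟨S, ⟨hS, haS⟩, rfl⟩
      exact ⟨⟨st.phi_max hS, mem_PhiAux.mpr (Or.inl ⟨haS, ha.1⟩)⟩,
        st.symm.phi_max hS, mem_PhiAux.mpr (Or.inl ⟨haS, ha.2⟩)⟩
    have h1 := Set.ncard_image_of_injOn
      (hinj {S | IsMaxStable G S ∧ a ∈ S} (fun S hS => hS.1))
    have h2 := Set.ncard_le_ncard hsub (Set.toFinite _)
    rw [h1, ncard_prod_aux] at h2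
    exact h2
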